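/- Let T : ℝ^d/ℤ^d → ℝ^d/ℤ^d be the affine automorphism T(x) = a + U(x), where a ∈ ℝ^d/ℤ^d and U is induced by a matrix Ũ ∈ GL(d, ℤ) satisfying (Ũ − I)^2 = 0 and Ũ(ã) = ã for a lift ã of a. Then T is almost automorphic: for every x, y ∈ ℝ^d/ℤ^d and every integer sequence (kᵢ) with T^{kᵢ}(x) → y, one has T^{-kᵢ}(y) → x. -/

import Mathlib

open Filter Topology

/-- The integer lattice `ℤ^d` inside `ℝ^d`. -/
def intLattice (d : ℕ) : AddSubgroup (Fin d → ℝ) :=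
  AddSubgroup.pi Set.univ fun _ => AddSubgroup.zmultiples (1 : ℝ)

/-- The torus `ℝ^d / ℤ^d`. -/
abbrev Torus (d : ℕ) := (Fin d → ℝ) ⧸ intLattice d

/-- A point `x` is almost automorphic for a homeomorphism `T` if whenever
`T^{kᵢ}(x) → y` along a sequence of integers `kᵢ`, one has `T^{-kᵢ}(y) → x`. -/
def IsAlmostAutomorphicPt {X : Type*} [TopologicalSpace X] (T : X ≃ₜ X) (x : X) : Prop :=
  ∀ (y : X) (k : ℕ → ℤ), Tendsto (fun i => (T.toEquiv ^ (k i)) x) atTop (𝓝 y) →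
    Tendsto (fun i => (T.toEquiv ^ (-(k i))) y) atTop (𝓝 x)

/-- `T` is almost automorphic if every point is almost automorphic for `T`. -/
def AlmostAutomorphic {X : Type*} [TopologicalSpace X] (T : X ≃ₜ X) : Prop :=
  ∀ x : X, IsAlmostAutomorphicPt T x

lemma mem_intLattice {d : ℕ} {x : Fin d → ℝ} :
    x ∈ intLattice d ↔ ∀ i, ∃ n : ℤ, (n : ℝ) = x i := by
  simp [intLattice, AddSubgroup.mem_pi, AddSubgroup.mem_zmultiples_iff, zsmul_eq_mul, mul_one]

lemma mulVec_mem_intLattice {d : ℕ} (M : Matrix (Fin d) (Fin d) ℤ) {x : Fin d → ℝ}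
    (hx : x ∈ intLattice d) : (M.map (Int.cast : ℤ → ℝ)).mulVec x ∈ intLattice d := by
  rw [mem_intLattice] at hx ⊢
  choose n hn using hx
  intro j
  refine ⟨(M.mulVec n) j, ?_⟩
  have h := RingHom.map_mulVec (Int.castRingHom ℝ) M n j
  simp only [Int.coe_castRingHom] at h
  rw [h]
  congr 1
  funext i
  exact hn i

/-- The endomorphism of the torus induced by an integer matrix. -/
noncomputable def matBar {d : ℕ} (M : Matrix (Fin d) (Fin d) ℤ) : Torus d →+ Torus d :=
  QuotientAddGroup.map (intLattice d) (intLattice d)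
    ((M.map (Int.cast : ℤ → ℝ)).mulVecLin.toAddMonoidHom)
    (fun x hx => by
      simpa [Matrix.mulVecLin_apply] using mulVec_mem_intLattice M hx)

lemma matBar_mk {d : ℕ} (M : Matrix (Fin d) (Fin d) ℤ) (x : Fin d → ℝ) :
    matBar M (QuotientAddGroup.mk x) =
      QuotientAddGroup.mk ((M.map (Int.cast : ℤ → ℝ)).mulVec x) := by
  simp [matBar, QuotientAddGroup.map_mk, Matrix.mulVecLin_apply]

lemma matBar_continuous {d : ℕ} (M : Matrix (Fin d) (Fin d) ℤ) :
    Continuous (matBar M) := by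
  apply (QuotientAddGroup.isQuotientMap_mk (intLattice d)).continuous_iff.mpr
  have : (matBar M) ∘ (QuotientAddGroup.mk : (Fin d → ℝ) → Torus d)
      = QuotientAddGroup.mk ∘ (fun x => (M.map (Int.cast : ℤ → ℝ)).mulVec x) := by
    funext x
    exact matBar_mk M x
  rw [this]
  exact continuous_quot_mk.comp (M.map (Int.cast : ℤ → ℝ)).mulVecLin.continuous_of_finiteDimensional

lemma isClosed_intLattice (d : ℕ) : IsClosed ((intLattice d : AddSubgroup _) : Set (Fin d → ℝ)) := by
  have h1 : ((AddSubgroup.zmultiples (1 : ℝ)) : Set ℝ) = Set.range (Int.cast : ℤ → ℝ) := by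
    ext x
    simp only [SetLike.mem_coe, AddSubgroup.mem_zmultiples_iff, Set.mem_range, zsmul_eq_mul,
      mul_one]
  have h2 : ((intLattice d : AddSubgroup _) : Set (Fin d → ℝ))
      = Set.pi Set.univ (fun _ => Set.range (Int.cast : ℤ → ℝ)) := by
    ext x
    simp only [SetLike.mem_coe, intLattice, AddSubgroup.mem_pi, Set.mem_pi, Set.mem_univ,
      forall_true_left, ← h1, SetLike.mem_coe]
  rw [h2]
  exact isClosed_set_pi fun i _ => Int.isClosedEmbedding_coe_real.isClosed_range

theorem affine_unipotent_nilrank_one_almost_automorphic {d : ℕ}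
    (U : Matrix (Fin d) (Fin d) ℤ) (hdet : U.det = 1 ∨ U.det = -1)
    (hU2 : (U - 1) ^ 2 = 0) (a : Fin d → ℝ)
    (hfix : (U.map (Int.cast : ℤ → ℝ)).mulVec a = a)
    (T : Torus d ≃ₜ Torus d)
    (hT : ∀ x : Fin d → ℝ,
      T (QuotientAddGroup.mk x) = QuotientAddGroup.mk (a + (U.map (Int.cast : ℤ → ℝ)).mulVec x)) :
    AlmostAutomorphic T := by
  haveI : IsClosed ((intLattice d : AddSubgroup _) : Set (Fin d → ℝ)) := isClosed_intLattice d
  set R : Matrix (Fin d) (Fin d) ℝ := U.map (Int.cast : ℤ → ℝ) with hRdef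
  set N : Matrix (Fin d) (Fin d) ℝ := R - 1 with hNdef
  have hNmap : N = (Int.castRingHom ℝ).mapMatrix (U - 1) := by
    simp [hNdef, hRdef, map_sub, RingHom.mapMatrix_apply]
  have hNN : N * N = 0 := by
    rw [hNmap, ← map_mul, ← sq, hU2, map_zero]
  have hNa : N.mulVec a = 0 := by
    rw [hNdef, Matrix.sub_mulVec, Matrix.one_mulVec, hfix, sub_self]
  have hNNx : ∀ w : Fin d → ℝ, N.mulVec (N.mulVec w) = 0 := by
    intro w
    rw [Matrix.mulVec_mulVec, hNN, Matrix.zero_mulVec]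
  have hlin : ∀ (c : ℤ) (w : Fin d → ℝ), N.mulVec (c • w) = c • N.mulVec w := by
    intro c w
    simpa [Matrix.mulVecLin_apply] using map_zsmul N.mulVecLin c w
  have hstep : ∀ (x : Fin d → ℝ) (c : ℤ),
      a + R.mulVec (x + c • (a + N.mulVec x)) = x + (c + 1) • (a + N.mulVec x) := by
    intro x c
    have hR : R = 1 + N := by rw [hNdef]; abel
    have hNv : N.mulVec (a + N.mulVec x) = 0 := by
      rw [Matrix.mulVec_add, hNa, hNNx, add_zero]
    rw [hR, Matrix.add_mulVec, Matrix.one_mulVec, Matrix.mulVec_add, hlin, hNv, smul_zero,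
      add_zero, add_one_zsmul]
    abel
  -- the key formula for all integer iterates
  have key : ∀ (c : ℤ) (x : Fin d → ℝ),
      (T.toEquiv ^ c) (QuotientAddGroup.mk x)
        = QuotientAddGroup.mk (x + c • (a + N.mulVec x)) := by
    intro c
    induction c using Int.induction_on with
    | zero => intro x; simp
    | succ n ih =>
        intro x
        have h1 : ((n : ℤ) + 1) = 1 + n := by ring
        rw [h1, zpow_add, zpow_one, Equiv.Perm.mul_apply, ih x]
        have := hT (x + (n : ℤ) • (a + N.mulVec x))
        simp only [Homeomorph.coe_toEquiv]
        rw [this, hstep x n, add_comm ((n : ℤ)) 1]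
    | pred n ih =>
        intro x
        apply T.toEquiv.injective
        have hmul : T.toEquiv * T.toEquiv ^ (-(n : ℤ) - 1) = T.toEquiv ^ (-(n : ℤ)) := by
          calc T.toEquiv * T.toEquiv ^ (-(n : ℤ) - 1)
              = T.toEquiv ^ (1 : ℤ) * T.toEquiv ^ (-(n : ℤ) - 1) := by rw [zpow_one]
            _ = T.toEquiv ^ ((1 : ℤ) + (-(n : ℤ) - 1)) := (zpow_add _ _ _).symm
            _ = T.toEquiv ^ (-(n : ℤ)) := by norm_num
        have hcomp : T.toEquiv ((T.toEquiv ^ (-(n : ℤ) - 1)) (QuotientAddGroup.mk x))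
            = (T.toEquiv ^ (-(n : ℤ))) (QuotientAddGroup.mk x) := by
          rw [← Equiv.Perm.mul_apply, hmul]
        rw [hcomp, ih x]
        simp only [Homeomorph.coe_toEquiv]
        rw [hT (x + (-(n : ℤ) - 1) • (a + N.mulVec x)), hstep x (-(n : ℤ) - 1)]
        norm_num
  -- now prove almost automorphy
  intro x0
  obtain ⟨x, rfl⟩ := QuotientAddGroup.mk_surjective x0
  intro y k hten
  obtain ⟨z, rfl⟩ := QuotientAddGroup.mk_surjective y
  set V : Torus d := QuotientAddGroup.mk (a + N.mulVec x) with hV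
  set W : Torus d := QuotientAddGroup.mk (a + N.mulVec z) with hW
  have mk_addhom : ∀ (u w : Fin d → ℝ),
      (QuotientAddGroup.mk (u + w) : Torus d) = QuotientAddGroup.mk u + QuotientAddGroup.mk w :=
    fun u w => rfl
  have mk_zsmul : ∀ (c : ℤ) (u : Fin d → ℝ),
      (QuotientAddGroup.mk (c • u) : Torus d) = c • QuotientAddGroup.mk u := by
    intro c u
    simpa using map_zsmul (QuotientAddGroup.mk' (intLattice d)) c u
  have hten' : Tendsto (fun i => QuotientAddGroup.mk x + k i • V) atTop
      (𝓝 (QuotientAddGroup.mk z)) := by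
    have : ∀ i, (T.toEquiv ^ k i) (QuotientAddGroup.mk x : Torus d)
        = QuotientAddGroup.mk x + k i • V := by
      intro i
      rw [key (k i) x, mk_addhom, mk_zsmul]
    simpa [this] using hten
  -- N̄ y = N̄ x via continuity
  have hBV : matBar (U - 1) V = 0 := by
    have hmapN : (U - 1).map (Int.cast : ℤ → ℝ) = N := hNmap.symm
    rw [hV, matBar_mk, hmapN]
    have : N.mulVec (a + N.mulVec x) = 0 := by
      rw [Matrix.mulVec_add, hNa, hNNx, add_zero]
    rw [this]
    rfl
  have hNxz : matBar (U - 1) (QuotientAddGroup.mk x) = matBar (U - 1) (QuotientAddGroup.mk z) := by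
    have hc : Tendsto (fun i => matBar (U - 1) (QuotientAddGroup.mk x + k i • V)) atTop
        (𝓝 (matBar (U - 1) (QuotientAddGroup.mk z))) :=
      ((matBar_continuous (U - 1)).tendsto _).comp hten'
    have heq : ∀ i, matBar (U - 1) (QuotientAddGroup.mk x + k i • V)
        = matBar (U - 1) (QuotientAddGroup.mk x) := by
      intro i
      rw [map_add, map_zsmul, hBV, smul_zero, add_zero]
    rw [funext heq] at hc
    exact tendsto_nhds_unique tendsto_const_nhds hc
  have hWV : W = V := by
    have hmapN : (U - 1).map (Int.cast : ℤ → ℝ) = N := hNmap.symm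
    have hx' : matBar (U - 1) (QuotientAddGroup.mk x) = QuotientAddGroup.mk (N.mulVec x) := by
      rw [matBar_mk, hmapN]
    have hz' : matBar (U - 1) (QuotientAddGroup.mk z) = QuotientAddGroup.mk (N.mulVec z) := by
      rw [matBar_mk, hmapN]
    rw [hW, hV, mk_addhom, mk_addhom, ← hx', ← hz', hNxz]
  -- conclude
  have hform : ∀ i, (T.toEquiv ^ (-(k i))) (QuotientAddGroup.mk z : Torus d)
      = (QuotientAddGroup.mk z - (QuotientAddGroup.mk x + k i • V)) + QuotientAddGroup.mk x := by
    intro i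
    rw [key (-(k i)) z, mk_addhom, mk_zsmul, ← hW, hWV, neg_zsmul]
    abel
  simp only [hform]
  have : Tendsto (fun i => (QuotientAddGroup.mk z - (QuotientAddGroup.mk x + k i • V))
      + (QuotientAddGroup.mk x : Torus d)) atTop
      (𝓝 ((QuotientAddGroup.mk z - QuotientAddGroup.mk z) + QuotientAddGroup.mk x)) :=
    ((tendsto_const_nhds.sub hten').add tendsto_const_nhds)
  simpa using this
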